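/- For every ξ ∈ [0, π], the complex quantity ∫_{−ξ}^{ξ} 1 dz + ∫_{ξ}^{π} exp(i(ξ − z)) dz + ∫_{−π}^{−ξ} exp(−i(ξ + z)) dz equals the real number 2ξ + 2 sin(ξ). Consequently the normalized beamforming gain of a DMA with angular weight fill ξ, obtained by averaging over channel phases uniformly distributed on the unit circle when phases outside the feasible range are mapped to the nearest endpoint, is W_fill(ξ) = |(1/(2π))(2 sin(ξ) + 2ξ)|². -/

import Mathlib

open Complex intervalIntegral

lemma aux_int1 (ξ : ℝ) :
    (∫ z in ξ..Real.pi, Complex.exp (Complex.I * ((ξ - z : ℝ) : ℂ))) =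
      Complex.exp (Complex.I * ξ) *
        ((Complex.exp (-Complex.I * Real.pi) - Complex.exp (-Complex.I * ξ)) / (-Complex.I)) := by
  have h : ∀ z : ℝ, Complex.exp (Complex.I * ((ξ - z : ℝ) : ℂ)) =
      Complex.exp (Complex.I * ξ) * Complex.exp ((-Complex.I) * z) := by
    intro z
    rw [← Complex.exp_add]
    push_cast
    ring_nf
  simp_rw [h]
  rw [intervalIntegral.integral_const_mul, integral_exp_mul_complex (by simp [Complex.I_ne_zero])]

lemma aux_int2 (ξ : ℝ) :
    (∫ z in (-Real.pi)..(-ξ), Complex.exp (-Complex.I * ((ξ + z : ℝ) : ℂ))) =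
      Complex.exp (-Complex.I * ξ) *
        ((Complex.exp (-Complex.I * (-ξ)) - Complex.exp (-Complex.I * (-Real.pi))) / (-Complex.I)) := by
  have h : ∀ z : ℝ, Complex.exp (-Complex.I * ((ξ + z : ℝ) : ℂ)) =
      Complex.exp (-Complex.I * ξ) * Complex.exp ((-Complex.I) * z) := by
    intro z
    rw [← Complex.exp_add]
    push_cast
    ring_nf
  simp_rw [h]
  rw [intervalIntegral.integral_const_mul, integral_exp_mul_complex (by simp [Complex.I_ne_zero])]
  norm_cast

theorem stmt9 (ξ : ℝ) (hξ : ξ ∈ Set.Icc 0 Real.pi) :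
    ((∫ z in (-ξ)..ξ, (1 : ℂ)) +
        (∫ z in ξ..Real.pi, Complex.exp (Complex.I * ((ξ - z : ℝ) : ℂ))) +
        (∫ z in (-Real.pi)..(-ξ), Complex.exp (-Complex.I * ((ξ + z : ℝ) : ℂ))) =
      ((2 * ξ + 2 * Real.sin ξ : ℝ) : ℂ)) ∧
    ‖(((1 / (2 * Real.pi) : ℝ) : ℂ) *
        ((∫ z in (-ξ)..ξ, (1 : ℂ)) +
          (∫ z in ξ..Real.pi, Complex.exp (Complex.I * ((ξ - z : ℝ) : ℂ))) +
          (∫ z in (-Real.pi)..(-ξ), Complex.exp (-Complex.I * ((ξ + z : ℝ) : ℂ)))))‖ ^ 2 =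
      ((1 / (2 * Real.pi)) * (2 * Real.sin ξ + 2 * ξ)) ^ 2 := by
  have key : (∫ z in (-ξ)..ξ, (1 : ℂ)) +
        (∫ z in ξ..Real.pi, Complex.exp (Complex.I * ((ξ - z : ℝ) : ℂ))) +
        (∫ z in (-Real.pi)..(-ξ), Complex.exp (-Complex.I * ((ξ + z : ℝ) : ℂ))) =
      ((2 * ξ + 2 * Real.sin ξ : ℝ) : ℂ) := by
    rw [aux_int1, aux_int2, intervalIntegral.integral_const]
    have e1 : Complex.exp (Complex.I * ξ) = Complex.cos ξ + Complex.sin ξ * Complex.I := by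
      rw [mul_comm, Complex.exp_mul_I]
    have e2 : Complex.exp (-Complex.I * ξ) = Complex.cos ξ - Complex.sin ξ * Complex.I := by
      rw [show -Complex.I * (ξ:ℂ) = (-ξ:ℂ) * Complex.I by ring, Complex.exp_mul_I,
        Complex.cos_neg, Complex.sin_neg]; ring
    have e3 : Complex.exp (-Complex.I * (Real.pi : ℂ)) = -1 := by
      rw [show -Complex.I * (Real.pi:ℂ) = (Real.pi:ℂ) * -Complex.I by ring]
      simp [Complex.exp_pi_mul_I, Complex.exp_neg, Complex.exp_mul_I]
    have e4 : Complex.exp (-Complex.I * (-(ξ:ℝ) : ℂ)) = Complex.cos ξ + Complex.sin ξ * Complex.I := by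
      rw [show -Complex.I * (-(ξ:ℝ):ℂ) = (ξ:ℂ) * Complex.I by ring, Complex.exp_mul_I]
    have e5 : Complex.exp (-Complex.I * (-(Real.pi:ℝ) : ℂ)) = -1 := by
      rw [show -Complex.I * (-(Real.pi:ℝ):ℂ) = (Real.pi:ℂ) * Complex.I by ring,
        Complex.exp_pi_mul_I]
    push_cast
    rw [e1, e2, e3, e4, e5]
    have hI := Complex.I_ne_zero
    field_simp
    rw [← Complex.ofReal_sin]
    ring_nf
    try ring_nf
    simp only [Complex.real_smul, mul_one]
    push_cast
    ring
  refine ⟨key, ?_⟩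
  rw [key, ← Complex.ofReal_mul, Complex.norm_real, Real.norm_eq_abs, _root_.sq_abs]
  push_cast
  ring
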